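/- Let τ > 0 and τ_M > 0 be reals and N ≥ 1 an integer with N·τ_M ≥ τ (equivalently, N ≥ τ/τ_M, which holds whenever N ≥ ⌈τ/τ_M⌉). Then the staggered inference schedule with period τ and N processes leaves no environment step without an action after startup: for every real t ≥ τ there exists l ∈ ℕ with t ≤ τ + l·(τ/N) < t + τ_M. Consequently every interval [t, t + τ_M) with t ≥ τ contains an action time, so the fraction of environment steps of length τ_M in [0, T] containing no action tends to 0 as T → ∞. -/

import Mathlib

open scoped Classical

/-- **Staggered inference eliminates inaction.**
Let `τ, τM > 0` and `N ≥ 1` with `N·τM ≥ τ` (which holds whenever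
`N ≥ ⌈τ/τM⌉`).  The staggered schedule with action times `τ + l·τ/N` (`l ∈ ℕ`)
leaves no environment step without an action after startup: every interval
`[t, t + τM)` with `t ≥ τ` contains an action time.  Consequently the fraction
of environment steps of length `τM` among the first `K` steps that contain no
action time tends to `0` as `K → ∞`. -/
theorem staggered_inference_no_inaction
    (τ τM : ℝ) (hτ : 0 < τ) (hτM : 0 < τM) (N : ℕ) (hN : 1 ≤ N)
    (hcover : τ ≤ (N : ℝ) * τM) :
    (∀ t : ℝ, τ ≤ t →
        ∃ l : ℕ, t ≤ τ + (l : ℝ) * (τ / N) ∧ τ + (l : ℝ) * (τ / N) < t + τM)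
      ∧ Filter.Tendsto
          (fun K : ℕ =>
            (((Finset.range K).filter (fun k : ℕ =>
                ¬ ∃ l : ℕ, (k : ℝ) * τM ≤ τ + (l : ℝ) * (τ / N)
                    ∧ τ + (l : ℝ) * (τ / N) < ((k : ℝ) + 1) * τM)).card : ℝ) / (K : ℝ))
          Filter.atTop (nhds 0) := by
  have hN0 : (0 : ℝ) < N := by exact_mod_cast hN
  have hstep : τ / N ≤ τM := by
    rw [div_le_iff₀ hN0]
    linarith [hcover]
  have hstep0 : 0 < τ / N := div_pos hτ hN0
  have main : ∀ t : ℝ, τ ≤ t →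
      ∃ l : ℕ, t ≤ τ + (l : ℝ) * (τ / N) ∧ τ + (l : ℝ) * (τ / N) < t + τM := by
    intro t ht
    set x : ℝ := (t - τ) / (τ / N) with hx
    have hx0 : 0 ≤ x := div_nonneg (by linarith) hstep0.le
    refine ⟨⌈x⌉₊, ?_, ?_⟩
    · have h1 : x ≤ (⌈x⌉₊ : ℝ) := Nat.le_ceil x
      have h1' := mul_le_mul_of_nonneg_right h1 hstep0.le
      rw [hx, div_mul_cancel₀ _ hstep0.ne'] at h1'
      rw [← hx] at h1'
      linarith
    · have h2 : (⌈x⌉₊ : ℝ) < x + 1 := Nat.ceil_lt_add_one hx0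
      have h2' := mul_lt_mul_of_pos_right h2 hstep0
      rw [add_mul, one_mul, hx, div_mul_cancel₀ _ hstep0.ne'] at h2'
      rw [← hx] at h2'
      linarith
  refine ⟨main, ?_⟩
  set M : ℕ := ⌈τ / τM⌉₊ + 1 with hM
  have hsub : ∀ K : ℕ,
      ((Finset.range K).filter (fun k : ℕ =>
          ¬ ∃ l : ℕ, (k : ℝ) * τM ≤ τ + (l : ℝ) * (τ / N)
              ∧ τ + (l : ℝ) * (τ / N) < ((k : ℝ) + 1) * τM)).card ≤ M := by
    intro K
    have : ((Finset.range K).filter (fun k : ℕ =>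
          ¬ ∃ l : ℕ, (k : ℝ) * τM ≤ τ + (l : ℝ) * (τ / N)
              ∧ τ + (l : ℝ) * (τ / N) < ((k : ℝ) + 1) * τM)) ⊆ Finset.range M := by
      intro k hk
      simp only [Finset.mem_filter, Finset.mem_range] at hk ⊢
      by_contra hkM
      push_neg at hkM
      have hτk : τ ≤ (k : ℝ) * τM := by
        have h1 : τ / τM ≤ (⌈τ / τM⌉₊ : ℝ) := Nat.le_ceil _
        have h2 : (M : ℝ) ≤ (k : ℝ) := by exact_mod_cast hkM
        have h3 : (⌈τ / τM⌉₊ : ℝ) + 1 ≤ (k : ℝ) := by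
          rw [hM] at h2; push_cast at h2; linarith
        have h4 : τ / τM ≤ (k : ℝ) := by linarith
        have := (div_le_iff₀ hτM).mp h4
        linarith
      obtain ⟨l, hl1, hl2⟩ := main ((k : ℝ) * τM) hτk
      exact hk.2 ⟨l, hl1, by linarith [hl2]⟩
    calc _ ≤ (Finset.range M).card := Finset.card_le_card this
      _ = M := Finset.card_range M
  have hlim : Filter.Tendsto (fun K : ℕ => (M : ℝ) / (K : ℝ))
      Filter.atTop (nhds 0) := tendsto_const_div_atTop_nhds_zero_nat (M : ℝ)
  refine squeeze_zero (fun K => ?_) (fun K => ?_) hlim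
  · positivity
  · rcases Nat.eq_zero_or_pos K with h | h
    · simp [h]
    · exact div_le_div_of_nonneg_right (by exact_mod_cast hsub K)
        (by exact_mod_cast h.le)
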